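/- Let K be an algebraically closed field with char K ≠ 2 and V a 2-dimensional K-vector space. Consider the exterior algebra Λ(V) = K ⊕ V ⊕ Λ²(V), where Λ²(V) is the 1-dimensional top exterior power. Then a K-linear map φ : Λ(V) → Λ(V) satisfies φ(x·y) = φ(x)·φ(y) for all x, y ∈ Λ(V) (where · is the wedge product) if and only if either φ = 0, or the following hold: φ(1) = 1, and there exist g ∈ End_K(V) and a K-linear map c : V → Λ²(V) such that φ(v) = g(v) + c(v) for all v ∈ V and φ(ω) = (det g)·ω for all ω ∈ Λ²(V), where det g denotes the determinant of the linear endomorphism g. -/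

import Mathlib

open ExteriorAlgebra DirectSum

namespace ExtEndAux

variable {K : Type*} [Field K] {V : Type*} [AddCommGroup V] [Module K V]
variable (b : Module.Basis (Fin 2) K V)

/-- The top wedge `e₁ ∧ e₂`. -/
noncomputable def ωe : ExteriorAlgebra K V := ι K (b 0) * ι K (b 1)

lemma swap (x y : V) : ι K y * ι K x = -(ι K x * ι K y) :=
  eq_neg_of_add_eq_zero_left (by rw [add_comm]; exact ExteriorAlgebra.ι_add_mul_swap x y)

lemma ι_expand (v : V) : ι K v = b.repr v 0 • ι K (b 0) + b.repr v 1 • ι K (b 1) := by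
  conv_lhs => rw [← b.sum_repr v]
  simp only [Fin.sum_univ_two, map_add, map_smul]

lemma ι_mul_ωe (v : V) : ι K v * ωe b = 0 := by
  rw [ι_expand b v, ωe]
  have h1 : ι K (b 0) * (ι K (b 0) * ι K (b 1)) = 0 := by
    rw [← mul_assoc, ι_sq_zero, zero_mul]
  have h2 : ι K (b 1) * (ι K (b 0) * ι K (b 1)) = 0 := by
    rw [← mul_assoc, swap (b 0) (b 1), neg_mul, mul_assoc, ι_sq_zero, mul_zero, neg_zero]
  rw [add_mul, smul_mul_assoc, smul_mul_assoc, h1, h2, smul_zero, smul_zero, add_zero]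

lemma ωe_mul_ι (v : V) : ωe b * ι K v = 0 := by
  rw [ι_expand b v, ωe]
  have h1 : ι K (b 0) * ι K (b 1) * ι K (b 0) = 0 := by
    rw [mul_assoc, swap (b 0) (b 1), mul_neg, ← mul_assoc, ι_sq_zero, zero_mul, neg_zero]
  have h2 : ι K (b 0) * ι K (b 1) * ι K (b 1) = 0 := by
    rw [mul_assoc, ι_sq_zero, mul_zero]
  rw [mul_add, mul_smul_comm, mul_smul_comm, h1, h2, smul_zero, smul_zero, add_zero]

lemma ωe_mul_ωe : ωe b * ωe b = 0 := by
  rw [ωe, ← mul_assoc, mul_assoc (ι K (b 0)) (ι K (b 1)) (ι K (b 0)),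
    swap (b 0) (b 1), mul_neg, ← mul_assoc, ι_sq_zero, zero_mul, neg_zero, zero_mul]

lemma ι_mul_ι (x y : V) :
    ι K x * ι K y = (b.repr x 0 * b.repr y 1 - b.repr x 1 * b.repr y 0) • ωe b := by
  rw [ι_expand b x, ι_expand b y]
  rw [add_mul, mul_add, mul_add]
  rw [smul_mul_assoc, smul_mul_assoc, smul_mul_assoc, smul_mul_assoc,
    mul_smul_comm, mul_smul_comm, mul_smul_comm, mul_smul_comm]
  rw [ι_sq_zero, ι_sq_zero, swap (b 0) (b 1)]
  rw [sub_smul, ← ωe]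
  module

lemma pow_eq (n : ℕ) :
    (⋀[K]^n V) = (LinearMap.range (ι K : V →ₗ[K] ExteriorAlgebra K V)) ^ n := rfl

lemma mem₀ (a : K) : (algebraMap K (ExteriorAlgebra K V)) a ∈ ⋀[K]^0 V := by
  have h1 : (1 : ExteriorAlgebra K V) ∈ ⋀[K]^0 V := SetLike.one_mem_graded _
  simpa [Algebra.algebraMap_eq_smul_one] using Submodule.smul_mem _ a h1

lemma mem₁ (v : V) : ι K v ∈ ⋀[K]^1 V := by
  rw [pow_eq, pow_one]; exact LinearMap.mem_range_self _ v

lemma mem₂ : ωe b ∈ ⋀[K]^2 V := by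
  rw [pow_eq, pow_two]
  exact Submodule.mul_mem_mul (LinearMap.mem_range_self _ _) (LinearMap.mem_range_self _ _)

lemma deg2_eq : (⋀[K]^2 V) = Submodule.span K {ωe b} := by
  apply le_antisymm
  · rw [pow_eq, pow_two, Submodule.mul_le]
    rintro _ ⟨x, rfl⟩ _ ⟨y, rfl⟩
    rw [ι_mul_ι b x y]
    exact Submodule.smul_mem _ _ (Submodule.mem_span_singleton_self _)
  · rw [Submodule.span_singleton_le_iff_mem]
    exact mem₂ b

include b in
lemma deg_ge3 (i : ℕ) (hi : 3 ≤ i) : (⋀[K]^i V) = ⊥ := by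
  obtain ⟨n, rfl⟩ := Nat.exists_eq_add_of_le hi
  have h3 : (LinearMap.range (ι K : V →ₗ[K] ExteriorAlgebra K V)) ^ 3 = ⊥ := by
    have h32 : (3 : ℕ) = 1 + 2 := rfl
    rw [h32, pow_add, pow_one, eq_bot_iff, Submodule.mul_le]
    intro m hm x hx
    rw [← pow_eq, deg2_eq b, Submodule.mem_span_singleton] at hx
    obtain ⟨k, rfl⟩ := hx
    obtain ⟨v, rfl⟩ := hm
    rw [mul_smul_comm, ι_mul_ωe b v, smul_zero]
    exact Submodule.zero_mem _
  rw [pow_eq, pow_add, h3, Submodule.bot_mul]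

/-- projection onto the degree-i component -/
noncomputable def π (i : ℕ) : ExteriorAlgebra K V →ₗ[K] ExteriorAlgebra K V :=
  GradedAlgebra.proj (fun i : ℕ => ⋀[K]^i V) i

lemma π_of_mem_same {i : ℕ} {x : ExteriorAlgebra K V} (h : x ∈ ⋀[K]^i V) :
    π (K := K) (V := V) i x = x := by
  rw [π, GradedAlgebra.proj_apply,
    DirectSum.decompose_of_mem_same (ℳ := fun i : ℕ => ⋀[K]^i V) h]

lemma π_of_mem_ne {i j : ℕ} {x : ExteriorAlgebra K V} (h : x ∈ ⋀[K]^i V) (hij : i ≠ j) :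
    π (K := K) (V := V) j x = 0 := by
  rw [π, GradedAlgebra.proj_apply,
    DirectSum.decompose_of_mem_ne (ℳ := fun i : ℕ => ⋀[K]^i V) h hij]

lemma π_mem (i : ℕ) (x : ExteriorAlgebra K V) : π (K := K) (V := V) i x ∈ ⋀[K]^i V := by
  rw [π, GradedAlgebra.proj_apply]
  exact SetLike.coe_mem _

include b in
lemma span_top :
    Submodule.span K {(1 : ExteriorAlgebra K V), ι K (b 0), ι K (b 1), ωe b} = ⊤ := by
  rw [Submodule.eq_top_iff']
  intro x
  induction x using DirectSum.Decomposition.inductionOn (fun i : ℕ => ⋀[K]^i V) with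
  | zero => exact Submodule.zero_mem _
  | add _ _ hm hm' => exact Submodule.add_mem _ hm hm'
  | @homogeneous i m =>
    obtain ⟨x, hx⟩ := m
    match i with
    | 0 =>
      show x ∈ Submodule.span K {1, ι K (b 0), ι K (b 1), ωe b}
      obtain ⟨a, rfl⟩ := Submodule.mem_one.mp
        (by rw [← pow_zero (LinearMap.range (ι K : V →ₗ[K] ExteriorAlgebra K V)), ← pow_eq]
            exact hx)
      rw [Algebra.algebraMap_eq_smul_one]
      exact Submodule.smul_mem _ _ (Submodule.subset_span (by simp))
    | 1 =>
      show x ∈ Submodule.span K {1, ι K (b 0), ι K (b 1), ωe b}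
      rw [pow_eq, pow_one] at hx
      obtain ⟨v, rfl⟩ := hx
      rw [ι_expand b v]
      exact Submodule.add_mem _
        (Submodule.smul_mem _ _ (Submodule.subset_span (by simp)))
        (Submodule.smul_mem _ _ (Submodule.subset_span (by simp)))
    | 2 =>
      show x ∈ Submodule.span K {1, ι K (b 0), ι K (b 1), ωe b}
      rw [show (⋀[K]^2 V : Submodule K (ExteriorAlgebra K V)) = _ from deg2_eq b,
        Submodule.mem_span_singleton] at hx
      obtain ⟨k, rfl⟩ := hx
      exact Submodule.smul_mem _ _ (Submodule.subset_span (by simp))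
    | (n+3) =>
      show x ∈ Submodule.span K {1, ι K (b 0), ι K (b 1), ωe b}
      rw [deg_ge3 b (n+3) (by omega), Submodule.mem_bot] at hx
      subst hx
      exact Submodule.zero_mem _

include b in
lemma sum_π (x : ExteriorAlgebra K V) :
    π (K := K) (V := V) 0 x + π (K := K) (V := V) 1 x + π (K := K) (V := V) 2 x = x := by
  have : (π (K := K) (V := V) 0 + π (K := K) (V := V) 1 + π (K := K) (V := V) 2)
      = LinearMap.id := by
    apply LinearMap.ext_on (span_top b)
    intro y hy
    simp only [Set.mem_insert_iff, Set.mem_singleton_iff] at hy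
    obtain rfl | rfl | rfl | rfl := hy <;>
      simp only [LinearMap.add_apply, LinearMap.id_apply] <;>
      [ (rw [π_of_mem_same (SetLike.one_mem_graded _),
          π_of_mem_ne (SetLike.one_mem_graded _) (by norm_num),
          π_of_mem_ne (SetLike.one_mem_graded _) (by norm_num)]);
        (rw [π_of_mem_same (mem₁ _), π_of_mem_ne (mem₁ _) (by norm_num),
          π_of_mem_ne (mem₁ _) (by norm_num)]);
        (rw [π_of_mem_same (mem₁ _), π_of_mem_ne (mem₁ _) (by norm_num),
          π_of_mem_ne (mem₁ _) (by norm_num)]);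
        (rw [π_of_mem_same (mem₂ b), π_of_mem_ne (mem₂ b) (by norm_num),
          π_of_mem_ne (mem₂ b) (by norm_num)])] <;>
      abel
  have h := congrFun (congrArg DFunLike.coe this) x
  simpa using h

lemma unique_decomp {a a' : K} {u u' w w' : ExteriorAlgebra K V}
    (hu : u ∈ ⋀[K]^1 V) (hu' : u' ∈ ⋀[K]^1 V) (hw : w ∈ ⋀[K]^2 V) (hw' : w' ∈ ⋀[K]^2 V)
    (h : algebraMap K (ExteriorAlgebra K V) a + u + w
        = algebraMap K (ExteriorAlgebra K V) a' + u' + w') :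
    a = a' ∧ u = u' ∧ w = w' := by
  have h0 := congrArg (π (K := K) (V := V) 0) h
  have h1 := congrArg (π (K := K) (V := V) 1) h
  have h2 := congrArg (π (K := K) (V := V) 2) h
  simp only [map_add] at h0 h1 h2
  rw [π_of_mem_same (mem₀ a), π_of_mem_same (mem₀ a'),
    π_of_mem_ne hu (by norm_num), π_of_mem_ne hu' (by norm_num),
    π_of_mem_ne hw (by norm_num), π_of_mem_ne hw' (by norm_num)] at h0
  rw [π_of_mem_ne (mem₀ a) (by norm_num), π_of_mem_ne (mem₀ a') (by norm_num),
    π_of_mem_same hu, π_of_mem_same hu',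
    π_of_mem_ne hw (by norm_num), π_of_mem_ne hw' (by norm_num)] at h1
  rw [π_of_mem_ne (mem₀ a) (by norm_num), π_of_mem_ne (mem₀ a') (by norm_num),
    π_of_mem_ne hu (by norm_num), π_of_mem_ne hu' (by norm_num),
    π_of_mem_same hw, π_of_mem_same hw'] at h2
  refine ⟨?_, by simpa using h1, by simpa using h2⟩
  have := (ExteriorAlgebra.algebraMap_inj (M := V) a a').mp (by simpa using h0)
  exact this

include b in
lemma square_decomp (a : K) (u w : ExteriorAlgebra K V)
    (hu : u ∈ ⋀[K]^1 V) (hw : w ∈ ⋀[K]^2 V) :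
    (algebraMap K (ExteriorAlgebra K V) a + u + w)
        * (algebraMap K (ExteriorAlgebra K V) a + u + w)
      = algebraMap K (ExteriorAlgebra K V) (a * a) + (2 * a) • u + (2 * a) • w := by
  rw [pow_eq, pow_one] at hu
  obtain ⟨v, rfl⟩ := hu
  rw [deg2_eq b, Submodule.mem_span_singleton] at hw
  obtain ⟨k, rfl⟩ := hw
  set A := algebraMap K (ExteriorAlgebra K V) a with hA
  have hAx : ∀ x : ExteriorAlgebra K V, A * x = a • x := fun x => (Algebra.smul_def a x).symm
  have hxA : ∀ x : ExteriorAlgebra K V, x * A = a • x := fun x => by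
    rw [← Algebra.commutes a x, hAx]
  rw [add_mul, add_mul, mul_add, mul_add, mul_add, mul_add, mul_add, mul_add]
  simp only [smul_mul_assoc, mul_smul_comm, hAx, hxA, ι_sq_zero, ι_mul_ωe b v,
    ωe_mul_ι b v, ωe_mul_ωe b, smul_zero]
  have hAA : a • A = algebraMap K (ExteriorAlgebra K V) (a * a) := by
    rw [Algebra.smul_def a A, hA, ← map_mul]
  rw [hAA]
  module

lemma det_eq (g : V →ₗ[K] V) : LinearMap.det g =
    b.repr (g (b 0)) 0 * b.repr (g (b 1)) 1 - b.repr (g (b 0)) 1 * b.repr (g (b 1)) 0 := by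
  rw [← LinearMap.det_toMatrix b g, Matrix.det_fin_two]
  simp [LinearMap.toMatrix_apply]
  ring

end ExtEndAux

open ExtEndAux

set_option maxHeartbeats 1000000 in
/-- Endomorphisms of the exterior algebra of a 2-dimensional space `V` over an algebraically
closed field of characteristic `≠ 2`: a linear map `φ` of `Λ(V)` is multiplicative iff it is
zero, or it fixes `1`, maps `v ∈ V` to `g v + c v` with `g` a linear endomorphism of `V` and
`c : V → Λ²(V)` linear, and acts on `Λ²(V)` as multiplication by `det g`. -/
theorem exteriorAlgebra_endomorphisms
    (K : Type*) [Field K] [IsAlgClosed K] (hchar : ringChar K ≠ 2)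
    (V : Type*) [AddCommGroup V] [Module K V] [FiniteDimensional K V]
    (hdim : Module.finrank K V = 2)
    (φ : ExteriorAlgebra K V →ₗ[K] ExteriorAlgebra K V) :
    (∀ x y : ExteriorAlgebra K V, φ (x * y) = φ x * φ y) ↔
      (φ = 0 ∨
        (φ 1 = 1 ∧
          ∃ (g : V →ₗ[K] V) (c : V →ₗ[K] ↥(⋀[K]^2 V)),
            (∀ v : V, φ (ι K v) = ι K (g v) + (c v : ExteriorAlgebra K V)) ∧
            (∀ ω ∈ ⋀[K]^2 V, φ ω = LinearMap.det g • ω))) := by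
  have b : Module.Basis (Fin 2) K V := Module.finBasisOfFinrankEq K V hdim
  constructor
  · intro hmul
    by_cases hz : φ = 0
    · exact Or.inl hz
    right
    -- decompose φ 1
    obtain ⟨a, ha⟩ := Submodule.mem_one.mp
      (by rw [← pow_zero (LinearMap.range (ι K : V →ₗ[K] ExteriorAlgebra K V)), ← pow_eq]
          exact π_mem 0 (φ 1))
    have hsum := sum_π b (φ 1)
    rw [← ha] at hsum
    have hsq : (algebraMap K (ExteriorAlgebra K V) a + π (K := K) (V := V) 1 (φ 1)
        + π (K := K) (V := V) 2 (φ 1))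
        * (algebraMap K (ExteriorAlgebra K V) a + π (K := K) (V := V) 1 (φ 1)
        + π (K := K) (V := V) 2 (φ 1))
        = algebraMap K (ExteriorAlgebra K V) a + π (K := K) (V := V) 1 (φ 1)
        + π (K := K) (V := V) 2 (φ 1) := by
      rw [hsum, ← hmul 1 1, one_mul]
    rw [square_decomp b a _ _ (π_mem 1 (φ 1)) (π_mem 2 (φ 1))] at hsq
    obtain ⟨ha2, hu2, hw2⟩ := unique_decomp (Submodule.smul_mem _ _ (π_mem 1 (φ 1)))
      (π_mem 1 (φ 1)) (Submodule.smul_mem _ _ (π_mem 2 (φ 1))) (π_mem 2 (φ 1)) hsq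
    have haa : a = 0 ∨ a = 1 := by
      rcases mul_eq_zero.mp (show a * (a - 1) = 0 by rw [mul_sub, ha2]; ring) with h | h
      · exact Or.inl h
      · exact Or.inr (sub_eq_zero.mp h)
    rcases haa with rfl | rfl
    · -- φ 1 = 0, contradicting φ ≠ 0
      exfalso
      apply hz
      rw [show ((2:K) * 0) = 0 by ring, zero_smul] at hu2 hw2
      have h1 : φ 1 = 0 := by
        rw [← hsum, ← hu2, ← hw2, map_zero]
        simp
      apply LinearMap.ext
      intro x
      have hx := hmul 1 x
      rw [one_mul, h1, zero_mul] at hx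
      simpa using hx
    -- now φ 1 = 1
    have hu0 : π (K := K) (V := V) 1 (φ 1) = 0 := by
      have h2 : ((2:K) * 1 - 1) • π (K := K) (V := V) 1 (φ 1) = 0 := by
        rw [sub_smul, hu2, one_smul, sub_self]
      rw [show ((2:K) * 1 - 1) = 1 by norm_num, one_smul] at h2
      exact h2
    have hw0 : π (K := K) (V := V) 2 (φ 1) = 0 := by
      have h2 : ((2:K) * 1 - 1) • π (K := K) (V := V) 2 (φ 1) = 0 := by
        rw [sub_smul, hw2, one_smul, sub_self]
      rw [show ((2:K) * 1 - 1) = 1 by norm_num, one_smul] at h2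
      exact h2
    have hφ1 : φ 1 = 1 := by
      rw [← hsum, hu0, hw0, map_one, add_zero, add_zero]
    refine ⟨hφ1, ?_⟩
    -- the scalar part of φ (ι v) vanishes
    have hπ0 : ∀ v : V, π (K := K) (V := V) 0 (φ (ι K v)) = 0 := by
      intro v
      obtain ⟨av, hav⟩ := Submodule.mem_one.mp
        (by rw [← pow_zero (LinearMap.range (ι K : V →ₗ[K] ExteriorAlgebra K V)), ← pow_eq]
            exact π_mem 0 (φ (ι K v)))
      have hsumv := sum_π b (φ (ι K v))
      rw [← hav] at hsumv
      have hsqv : (algebraMap K (ExteriorAlgebra K V) av + π (K := K) (V := V) 1 (φ (ι K v))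
          + π (K := K) (V := V) 2 (φ (ι K v)))
          * (algebraMap K (ExteriorAlgebra K V) av + π (K := K) (V := V) 1 (φ (ι K v))
          + π (K := K) (V := V) 2 (φ (ι K v)))
          = algebraMap K (ExteriorAlgebra K V) 0 + 0 + 0 := by
        rw [hsumv, ← hmul, ι_sq_zero, map_zero, map_zero]
        simp
      rw [square_decomp b av _ _ (π_mem 1 _) (π_mem 2 _)] at hsqv
      obtain ⟨ha2, -, -⟩ := unique_decomp (Submodule.smul_mem _ _ (π_mem 1 _))
        (Submodule.zero_mem _) (Submodule.smul_mem _ _ (π_mem 2 _)) (Submodule.zero_mem _) hsqv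
      rw [← hav, mul_self_eq_zero.mp ha2, map_zero]
    -- define g and c
    set g : V →ₗ[K] V := ιInv ∘ₗ (π (K := K) (V := V) 1) ∘ₗ (φ ∘ₗ (ι K : V →ₗ[K] _)) with hg
    have hgι : ∀ v : V, ι K (g v) = π (K := K) (V := V) 1 (φ (ι K v)) := by
      intro v
      have hmem := π_mem (K := K) (V := V) 1 (φ (ι K v))
      rw [pow_eq, pow_one] at hmem
      obtain ⟨m, hm⟩ := hmem
      rw [hg]
      simp only [LinearMap.coe_comp, Function.comp_apply]
      rw [← hm, ι_leftInverse m]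
    set c : V →ₗ[K] ↥(⋀[K]^2 V) :=
      LinearMap.codRestrict (⋀[K]^2 V) ((π (K := K) (V := V) 2) ∘ₗ (φ ∘ₗ (ι K : V →ₗ[K] _)))
        (fun v => π_mem 2 _) with hc
    have hcι : ∀ v : V, (c v : ExteriorAlgebra K V) = π (K := K) (V := V) 2 (φ (ι K v)) :=
      fun v => rfl
    have hφι : ∀ v : V, φ (ι K v) = ι K (g v) + (c v : ExteriorAlgebra K V) := by
      intro v
      conv_lhs => rw [← sum_π b (φ (ι K v))]
      rw [hπ0 v, hgι v, hcι v, zero_add]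
    refine ⟨g, c, hφι, ?_⟩
    -- action on degree 2
    have hωe : φ (ωe b) = LinearMap.det g • ωe b := by
      have h2 : φ (ωe b) = φ (ι K (b 0)) * φ (ι K (b 1)) := by
        rw [ωe, hmul]
      obtain ⟨k0, hk0⟩ := Submodule.mem_span_singleton.mp
        (show ((c (b 0) : ExteriorAlgebra K V)) ∈ Submodule.span K {ωe b} by
          rw [← deg2_eq b]; exact (c (b 0)).2)
      obtain ⟨k1, hk1⟩ := Submodule.mem_span_singleton.mp
        (show ((c (b 1) : ExteriorAlgebra K V)) ∈ Submodule.span K {ωe b} by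
          rw [← deg2_eq b]; exact (c (b 1)).2)
      rw [h2, hφι (b 0), hφι (b 1), ← hk0, ← hk1]
      rw [add_mul, mul_add, mul_add]
      rw [mul_smul_comm, ι_mul_ωe b, smul_zero, smul_mul_assoc, ωe_mul_ι b, smul_zero,
        smul_mul_assoc, mul_smul_comm, ωe_mul_ωe b, smul_zero, smul_zero]
      rw [add_zero, add_zero, add_zero]
      rw [ι_mul_ι b, det_eq b g]
    intro ω hω
    obtain ⟨k, hk⟩ := Submodule.mem_span_singleton.mp
      (show ω ∈ Submodule.span K {ωe b} by rw [← deg2_eq b]; exact hω)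
    rw [← hk, map_smul, hωe, smul_comm]
  · rintro (rfl | ⟨hφ1, g, c, hφι, hφω⟩)
    · intro x y
      simp
    have hsp := span_top b
    -- φ on the generators
    have hωeφ : φ (ωe b) = LinearMap.det g • ωe b := hφω (ωe b) (mem₂ b)
    obtain ⟨k0, hk0⟩ := Submodule.mem_span_singleton.mp
      (show ((c (b 0) : ExteriorAlgebra K V)) ∈ Submodule.span K {ωe b} by
        rw [← deg2_eq b]; exact (c (b 0)).2)
    obtain ⟨k1, hk1⟩ := Submodule.mem_span_singleton.mp
      (show ((c (b 1) : ExteriorAlgebra K V)) ∈ Submodule.span K {ωe b} by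
        rw [← deg2_eq b]; exact (c (b 1)).2)
    have hφ0 : φ (ι K (b 0)) = ι K (g (b 0)) + k0 • ωe b := by rw [hφι, hk0]
    have hφ1' : φ (ι K (b 1)) = ι K (g (b 1)) + k1 • ωe b := by rw [hφι, hk1]
    -- products of images of vectors
    have himg : ∀ (x y : V) (kx ky : K),
        (ι K x + kx • ωe b) * (ι K y + ky • ωe b) = ι K x * ι K y := by
      intro x y kx ky
      rw [add_mul, mul_add, mul_add, mul_smul_comm, ι_mul_ωe b, smul_zero,
        smul_mul_assoc, ωe_mul_ι b, smul_zero, smul_mul_assoc, mul_smul_comm,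
        ωe_mul_ωe b, smul_zero, smul_zero]
      simp
    have hdet01 : ι K (g (b 0)) * ι K (g (b 1)) = LinearMap.det g • ωe b := by
      rw [ι_mul_ι b, det_eq b g]
    have hgen : ∀ x ∈ ({(1 : ExteriorAlgebra K V), ι K (b 0), ι K (b 1), ωe b} : Set _),
        ∀ y ∈ ({(1 : ExteriorAlgebra K V), ι K (b 0), ι K (b 1), ωe b} : Set _),
        φ (x * y) = φ x * φ y := by
      intro x hx y hy
      simp only [Set.mem_insert_iff, Set.mem_singleton_iff] at hx hy
      have hb00 : φ (ι K (b 0) * ι K (b 0)) = φ (ι K (b 0)) * φ (ι K (b 0)) := by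
        rw [ι_sq_zero, map_zero, hφ0, himg, ι_sq_zero]
      have hb11 : φ (ι K (b 1) * ι K (b 1)) = φ (ι K (b 1)) * φ (ι K (b 1)) := by
        rw [ι_sq_zero, map_zero, hφ1', himg, ι_sq_zero]
      have hb01 : φ (ι K (b 0) * ι K (b 1)) = φ (ι K (b 0)) * φ (ι K (b 1)) := by
        rw [hφ0, hφ1', himg, hdet01, ← ωe, hωeφ]
      have hb10 : φ (ι K (b 1) * ι K (b 0)) = φ (ι K (b 1)) * φ (ι K (b 0)) := by
        rw [hφ1', hφ0, himg, swap (b 0) (b 1), map_neg, ← ωe, hωeφ,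
          ι_mul_ι b (g (b 1)) (g (b 0)), det_eq b g, ← neg_smul]
        congr 1
        ring
      have hvω : ∀ (i : Fin 2) (ki : K), φ (ι K (b i) * ωe b)
          = (ι K (g (b i)) + ki • ωe b) * φ (ωe b) := by
        intro i ki
        rw [ι_mul_ωe b, map_zero, hωeφ]
        simp [add_mul, smul_mul_assoc, mul_smul_comm, ι_mul_ωe b, ωe_mul_ωe b]
      have hωv : ∀ (i : Fin 2) (ki : K), φ (ωe b * ι K (b i))
          = φ (ωe b) * (ι K (g (b i)) + ki • ωe b) := by
        intro i ki
        rw [ωe_mul_ι b, map_zero, hωeφ]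
        simp [mul_add, smul_mul_assoc, mul_smul_comm, ωe_mul_ι b, ωe_mul_ωe b]
      rcases hx with rfl | rfl | rfl | rfl <;> rcases hy with rfl | rfl | rfl | rfl
      · rw [one_mul, hφ1, one_mul]
      · rw [one_mul, hφ1, one_mul]
      · rw [one_mul, hφ1, one_mul]
      · rw [one_mul, hφ1, one_mul]
      · rw [mul_one, hφ1, mul_one]
      · exact hb00
      · exact hb01
      · rw [hφ0]; exact hvω 0 k0
      · rw [mul_one, hφ1, mul_one]
      · exact hb10
      · exact hb11
      · rw [hφ1']; exact hvω 1 k1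
      · rw [mul_one, hφ1, mul_one]
      · rw [hφ0]; exact hωv 0 k0
      · rw [hφ1']; exact hωv 1 k1
      · rw [ωe_mul_ωe b, map_zero, hωeφ]
        simp [smul_mul_assoc, mul_smul_comm, ωe_mul_ωe b]
    -- extend by bilinearity
    intro x y
    have hx : x ∈ Submodule.span K
        ({(1 : ExteriorAlgebra K V), ι K (b 0), ι K (b 1), ωe b} : Set _) := by
      rw [hsp]; exact Submodule.mem_top
    have hy : y ∈ Submodule.span K
        ({(1 : ExteriorAlgebra K V), ι K (b 0), ι K (b 1), ωe b} : Set _) := by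
      rw [hsp]; exact Submodule.mem_top
    induction hx, hy using Submodule.span_induction₂ with
    | mem_mem x y hx hy => exact hgen x hx y hy
    | zero_left y hy => simp
    | zero_right x hx => simp
    | add_left x y z hx hy hz h1 h2 => rw [add_mul, map_add, map_add, add_mul, h1, h2]
    | add_right x y z hx hy hz h1 h2 => rw [mul_add, map_add, map_add, mul_add, h1, h2]
    | smul_left r x y hx hy h => rw [smul_mul_assoc, map_smul, map_smul, smul_mul_assoc, h]
    | smul_right r x y hx hy h => rw [mul_smul_comm, map_smul, map_smul, mul_smul_comm, h]
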